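/- In the graph G of Example 1 (with parameters n ≥ t ≥ 4 and path lengths r < r'): for any ordering σ of G with Z <_σ X <_σ Y, we have scol_r(G,σ) ≤ 2t + 1. -/

import Mathlib

open SimpleGraph

/-- `y` is weakly `r`-reachable from `x` w.r.t. the ordering `le`:
`y ≤ x` and there is an `x,y`-path of length at most `r` all of whose
vertices `z` satisfy `y ≤ z`. -/
def wreach {V : Type*} (G : SimpleGraph V) (le : V → V → Prop) (r : ℕ) (x : V) : Set V :=
  {y | le y x ∧ ∃ p : G.Walk x y, p.IsPath ∧ p.length ≤ r ∧ ∀ z ∈ p.support, le y z}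

/-- `y` is strongly `r`-reachable from `x` w.r.t. the ordering `le`:
`y ≤ x` and there is an `x,y`-path of length at most `r` all of whose
vertices `z ≠ y` satisfy `x ≤ z`. -/
def sreach {V : Type*} (G : SimpleGraph V) (le : V → V → Prop) (r : ℕ) (x : V) : Set V :=
  {y | le y x ∧ ∃ p : G.Walk x y, p.IsPath ∧ p.length ≤ r ∧ ∀ z ∈ p.support, z ≠ y → le x z}

/-- `wcol_r(G, σ)`. -/
noncomputable def wcolOn {V : Type*} [Fintype V] (G : SimpleGraph V)
    (le : V → V → Prop) (r : ℕ) : ℕ :=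
  Finset.univ.sup fun x => Nat.card (wreach G le r x)

/-- `scol_r(G, σ)`. -/
noncomputable def scolOn {V : Type*} [Fintype V] (G : SimpleGraph V)
    (le : V → V → Prop) (r : ℕ) : ℕ :=
  Finset.univ.sup fun x => Nat.card (sreach G le r x)

/-- The weak `r`-coloring number. -/
noncomputable def wcol {V : Type*} [Fintype V] (G : SimpleGraph V) (r : ℕ) : ℕ :=
  ⨅ σ : LinearOrder V, wcolOn G σ.le r

/-- The strong `r`-coloring number. -/
noncomputable def scol {V : Type*} [Fintype V] (G : SimpleGraph V) (r : ℕ) : ℕ :=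
  ⨅ σ : LinearOrder V, scolOn G σ.le r

/-- `col(G, σ)`: one more than the max back-degree. -/
noncomputable def colOn {V : Type*} [Fintype V] (G : SimpleGraph V)
    (lt : V → V → Prop) : ℕ :=
  Finset.univ.sup fun x => 1 + Nat.card {y | G.Adj x y ∧ lt y x}

/-- The coloring number `col(G)`. -/
noncomputable def col {V : Type*} [Fintype V] (G : SimpleGraph V) : ℕ :=
  ⨅ σ : LinearOrder V, colOn G σ.lt


/-! ### The graph of Example 1. -/

/-- Ordered pairs `(i,j)` with `i ≠ j`. -/
abbrev Idx (n : ℕ) := {p : Fin n × Fin n // p.1 ≠ p.2}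

/-- Vertex set of Example 1: `Z ⊕ (X ⊕ (Y_P ⊕ Y_Q))`, where `Y_P` (resp. `Y_Q`)
are the internal vertices of the paths `P^h_{i,j}` (resp. `Q^h_{i,j}`). -/
abbrev ExV (n t r r' : ℕ) : Type :=
  (Fin n × Fin t) ⊕ (Idx n ⊕ ((Idx n × Fin t × Fin (r - 1)) ⊕ (Idx n × Fin t × Fin (r' - r - 1))))

variable (n t r r' : ℕ)

def zV (i : Fin n) (h : Fin t) : ExV n t r r' := Sum.inl (i, h)
def xV (p : Idx n) : ExV n t r r' := Sum.inr (Sum.inl p)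
def pIn (p : Idx n) (h : Fin t) (k : Fin (r - 1)) : ExV n t r r' :=
  Sum.inr (Sum.inr (Sum.inl (p, h, k)))
def qIn (p : Idx n) (h : Fin t) (k : Fin (r' - r - 1)) : ExV n t r r' :=
  Sum.inr (Sum.inr (Sum.inr (p, h, k)))

/-- The `k`-th vertex of the path `P^h_{i,j}` (of length `r`, from `z_i^h` to `x_{i,j}`). -/
def pv (p : Idx n) (h : Fin t) (k : ℕ) : ExV n t r r' :=
  if h0 : k = 0 then zV n t r r' p.1.1 h
  else if hk : k < r then pIn n t r r' p h ⟨k - 1, by omega⟩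
  else xV n t r r' p

/-- The `k`-th vertex of the path `Q^h_{i,j}` (of length `r' - r`, from `x_{i,j}` to `z_j^h`). -/
def qv (p : Idx n) (h : Fin t) (k : ℕ) : ExV n t r r' :=
  if h0 : k = 0 then xV n t r r' p
  else if hk : k < r' - r then qIn n t r r' p h ⟨k - 1, by omega⟩
  else zV n t r r' p.1.2 h

/-- The graph of Example 1: the union of all the paths `P^h_{i,j}` and `Q^h_{i,j}`. -/
def ExG : SimpleGraph (ExV n t r r') :=
  SimpleGraph.fromRel fun u v => ∃ (p : Idx n) (h : Fin t) (k : ℕ),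
    (k < r ∧ pv n t r r' p h k = u ∧ pv n t r r' p h (k + 1) = v) ∨
    (k < r' - r ∧ qv n t r r' p h k = u ∧ qv n t r r' p h (k + 1) = v)

-- shape lemmas
lemma pv_zero (p : Idx n) (h : Fin t) : pv n t r r' p h 0 = zV n t r r' p.1.1 h := by
  simp [pv]

lemma pv_mid (p : Idx n) (h : Fin t) {m : ℕ} (h1 : 0 < m) (h2 : m < r) :
    pv n t r r' p h m = pIn n t r r' p h ⟨m - 1, by omega⟩ := by
  have : ¬ m = 0 := by omega
  simp [pv, h2, *]

lemma pv_last (p : Idx n) (h : Fin t) {m : ℕ} (h1 : 0 < m) (h2 : r ≤ m) :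
    pv n t r r' p h m = xV n t r r' p := by
  have : ¬ m = 0 := by omega
  have : ¬ m < r := by omega
  simp [pv, *]

lemma qv_zero (p : Idx n) (h : Fin t) : qv n t r r' p h 0 = xV n t r r' p := by
  simp [qv]

lemma qv_mid (p : Idx n) (h : Fin t) {m : ℕ} (h1 : 0 < m) (h2 : m < r' - r) :
    qv n t r r' p h m = qIn n t r r' p h ⟨m - 1, by omega⟩ := by
  have : ¬ m = 0 := by omega
  simp [qv, h2, *]

lemma qv_last (p : Idx n) (h : Fin t) {m : ℕ} (h1 : 0 < m) (h2 : r' - r ≤ m) :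
    qv n t r r' p h m = zV n t r r' p.1.2 h := by
  have : ¬ m = 0 := by omega
  have : ¬ m < r' - r := by omega
  simp [qv, *]

lemma adj_cases {u v : ExV n t r r'} (hadj : (ExG n t r r').Adj u v) :
    ∃ (p : Idx n) (h : Fin t) (k : ℕ),
      (k < r ∧ ((pv n t r r' p h k = u ∧ pv n t r r' p h (k+1) = v) ∨
                (pv n t r r' p h k = v ∧ pv n t r r' p h (k+1) = u))) ∨
      (k < r' - r ∧ ((qv n t r r' p h k = u ∧ qv n t r r' p h (k+1) = v) ∨
                     (qv n t r r' p h k = v ∧ qv n t r r' p h (k+1) = u))) := by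
  rw [ExG, SimpleGraph.fromRel_adj] at hadj
  obtain ⟨-, hadj | hadj⟩ := hadj <;>
    obtain ⟨p, h, k, hc⟩ := hadj <;> refine ⟨p, h, k, ?_⟩ <;> tauto
-- psi machinery (Z-case distance potential)
def zval (i a : Fin n) : ℕ := if a = i then 0 else r + 1

def xval (i : Fin n) (p : Idx n) : ℕ :=
  if p.1.1 = i then r else if p.1.2 = i then min (r' - r) (r + 1) else r + 1

def psiP (i : Fin n) (p : Idx n) (m : ℕ) : ℕ :=
  min (r + 1) (min (zval n r i p.1.1 + m) (xval n r r' i p + (r - m)))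

def psiQ (i : Fin n) (p : Idx n) (m : ℕ) : ℕ :=
  min (r + 1) (min (xval n r r' i p + m) (zval n r i p.1.2 + (r' - r - m)))

def psi (i : Fin n) : ExV n t r r' → ℕ
  | Sum.inl (a, _) => zval n r i a
  | Sum.inr (Sum.inl p) => xval n r r' i p
  | Sum.inr (Sum.inr (Sum.inl (p, _, k))) => psiP n r r' i p (k.val + 1)
  | Sum.inr (Sum.inr (Sum.inr (p, _, k))) => psiQ n r r' i p (k.val + 1)

variable (hr : 1 ≤ r) (hrr' : r < r')

include hr hrr'

lemma psi_pv (i : Fin n) (p : Idx n) (h : Fin t) {m : ℕ} (hm : m ≤ r) :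
    psi n t r r' i (pv n t r r' p h m) = psiP n r r' i p m := by
  have hne := p.2
  rcases Nat.eq_zero_or_pos m with rfl | h1
  · rw [pv_zero, zV, psi, psiP, zval, xval]
    split_ifs <;> simp_all <;> omega
  rcases Nat.lt_or_ge m r with h2 | h2
  · rw [pv_mid n t r r' p h h1 h2, pIn, psi]
    have hv : ((⟨m - 1, by omega⟩ : Fin (r - 1)) : ℕ) = m - 1 := rfl
    rw [hv]
    congr 1
    omega
  · have hm' : r = m := by omega
    subst hm'
    rw [pv_last n t r r' p h h1 le_rfl, xV, psi, psiP, zval, xval]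
    split_ifs <;> simp_all <;> omega

lemma psi_qv (i : Fin n) (p : Idx n) (h : Fin t) {m : ℕ} (hm : m ≤ r' - r) :
    psi n t r r' i (qv n t r r' p h m) = psiQ n r r' i p m := by
  have hne := p.2
  rcases Nat.eq_zero_or_pos m with rfl | h1
  · rw [qv_zero, xV, psi, psiQ, zval, xval]
    split_ifs <;> simp_all <;> omega
  rcases Nat.lt_or_ge m (r' - r) with h2 | h2
  · rw [qv_mid n t r r' p h h1 h2, qIn, psi]
    have hv : ((⟨m - 1, by omega⟩ : Fin (r' - r - 1)) : ℕ) = m - 1 := rfl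
    rw [hv]
    congr 1
    omega
  · have hm' : r' - r = m := by omega
    subst hm'
    rw [qv_last n t r r' p h h1 le_rfl, zV, psi, psiQ, zval, xval]
    split_ifs <;> simp_all <;> omega

lemma psi_adj {i : Fin n} {u v : ExV n t r r'} (hadj : (ExG n t r r').Adj u v) :
    psi n t r r' i v ≤ psi n t r r' i u + 1 := by
  obtain ⟨p, h, k, ⟨hk, hc | hc⟩ | ⟨hk, hc | hc⟩⟩ := adj_cases n t r r' hadj <;>
    obtain ⟨h1, h2⟩ := hc <;> subst h1 <;> subst h2
  · rw [psi_pv n t r r' hr hrr' i p h (by omega), psi_pv n t r r' hr hrr' i p h (by omega),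
      psiP, psiP]
    omega
  · rw [psi_pv n t r r' hr hrr' i p h (by omega), psi_pv n t r r' hr hrr' i p h (by omega),
      psiP, psiP]
    omega
  · rw [psi_qv n t r r' hr hrr' i p h (by omega), psi_qv n t r r' hr hrr' i p h (by omega),
      psiQ, psiQ]
    omega
  · rw [psi_qv n t r r' hr hrr' i p h (by omega), psi_qv n t r r' hr hrr' i p h (by omega),
      psiQ, psiQ]
    omega

lemma psi_walk {i : Fin n} {u v : ExV n t r r'} (w : (ExG n t r r').Walk u v) :
    psi n t r r' i v ≤ psi n t r r' i u + w.length := by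
  induction w with
  | nil => simp
  | cons hadj w ih =>
      have := psi_adj n t r r' hr hrr' (i := i) hadj
      simp only [SimpleGraph.Walk.length_cons]
      omega
-- neighbor characterizations
omit hr hrr' in
lemma adj_xV {p₀ : Idx n} {v : ExV n t r r'} (hadj : (ExG n t r r').Adj (xV n t r r' p₀) v) :
    ∃ h : Fin t, v = pv n t r r' p₀ h (r - 1) ∨ v = qv n t r r' p₀ h 1 := by
  obtain ⟨p, h, k, ⟨hk, ⟨h1, h2⟩ | ⟨h1, h2⟩⟩ | ⟨hk, ⟨h1, h2⟩ | ⟨h1, h2⟩⟩⟩ :=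
    adj_cases n t r r' hadj
  · -- pv p h k = xV p₀ : impossible since k < r
    exfalso
    rcases Nat.eq_zero_or_pos k with rfl | hk0
    · rw [pv_zero] at h1; simp [zV, xV] at h1
    · rw [pv_mid n t r r' p h hk0 hk] at h1; simp [pIn, xV] at h1
  · -- pv p h (k+1) = xV p₀, so k+1 = r
    rcases Nat.lt_or_ge (k + 1) r with hlt | hge
    · exfalso; rw [pv_mid n t r r' p h (by omega) hlt] at h2; simp [pIn, xV] at h2
    · rw [pv_last n t r r' p h (by omega) hge] at h2
      simp only [xV, Sum.inr.injEq, Sum.inl.injEq] at h2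
      subst h2
      exact ⟨h, Or.inl (by rw [← h1]; congr 1; omega)⟩
  · -- qv p h k = xV p₀, so k = 0
    rcases Nat.eq_zero_or_pos k with rfl | hk0
    · rw [qv_zero] at h1
      simp only [xV, Sum.inr.injEq, Sum.inl.injEq] at h1
      subst h1
      exact ⟨h, Or.inr h2.symm⟩
    · exfalso; rw [qv_mid n t r r' p h hk0 hk] at h1; simp [qIn, xV] at h1
  · -- qv p h (k+1) = xV p₀ : impossible
    exfalso
    rcases Nat.lt_or_ge (k + 1) (r' - r) with hlt | hge
    · rw [qv_mid n t r r' p h (by omega) hlt] at h2; simp [qIn, xV] at h2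
    · rw [qv_last n t r r' p h (by omega) hge] at h2; simp [zV, xV] at h2

omit hr hrr' in
lemma adj_pIn {p₀ : Idx n} {h₀ : Fin t} {k₀ : Fin (r - 1)} {v : ExV n t r r'}
    (hadj : (ExG n t r r').Adj (pIn n t r r' p₀ h₀ k₀) v) :
    v = pv n t r r' p₀ h₀ k₀.val ∨ v = pv n t r r' p₀ h₀ (k₀.val + 2) := by
  obtain ⟨p, h, k, ⟨hk, ⟨h1, h2⟩ | ⟨h1, h2⟩⟩ | ⟨hk, ⟨h1, h2⟩ | ⟨h1, h2⟩⟩⟩ :=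
    adj_cases n t r r' hadj
  · rcases Nat.eq_zero_or_pos k with rfl | hk0
    · exfalso; rw [pv_zero] at h1; simp [zV, pIn] at h1
    · rw [pv_mid n t r r' p h hk0 hk] at h1
      simp only [pIn, Sum.inr.injEq, Sum.inl.injEq, Prod.mk.injEq, Fin.mk.injEq] at h1
      obtain ⟨rfl, rfl, hkk⟩ := h1
      have hv : k - 1 = k₀.val := congrArg Fin.val hkk
      right; rw [← h2]; congr 1; omega
  · rcases Nat.lt_or_ge (k + 1) r with hlt | hge
    · rw [pv_mid n t r r' p h (by omega) hlt] at h2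
      simp only [pIn, Sum.inr.injEq, Sum.inl.injEq, Prod.mk.injEq, Fin.mk.injEq] at h2
      obtain ⟨rfl, rfl, hkk⟩ := h2
      have hv : k + 1 - 1 = k₀.val := congrArg Fin.val hkk
      left; rw [← h1]; congr 1; all_goals omega
    · exfalso; rw [pv_last n t r r' p h (by omega) hge] at h2; simp [xV, pIn] at h2
  · exfalso
    rcases Nat.eq_zero_or_pos k with rfl | hk0
    · rw [qv_zero] at h1; simp [xV, pIn] at h1
    · rw [qv_mid n t r r' p h hk0 hk] at h1; simp [qIn, pIn] at h1
  · exfalso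
    rcases Nat.lt_or_ge (k + 1) (r' - r) with hlt | hge
    · rw [qv_mid n t r r' p h (by omega) hlt] at h2; simp [qIn, pIn] at h2
    · rw [qv_last n t r r' p h (by omega) hge] at h2; simp [zV, pIn] at h2

omit hr hrr' in
lemma adj_qIn {p₀ : Idx n} {h₀ : Fin t} {k₀ : Fin (r' - r - 1)} {v : ExV n t r r'}
    (hadj : (ExG n t r r').Adj (qIn n t r r' p₀ h₀ k₀) v) :
    v = qv n t r r' p₀ h₀ k₀.val ∨ v = qv n t r r' p₀ h₀ (k₀.val + 2) := by
  obtain ⟨p, h, k, ⟨hk, ⟨h1, h2⟩ | ⟨h1, h2⟩⟩ | ⟨hk, ⟨h1, h2⟩ | ⟨h1, h2⟩⟩⟩ :=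
    adj_cases n t r r' hadj
  · exfalso
    rcases Nat.eq_zero_or_pos k with rfl | hk0
    · rw [pv_zero] at h1; simp [zV, qIn] at h1
    · rw [pv_mid n t r r' p h hk0 hk] at h1; simp [pIn, qIn] at h1
  · exfalso
    rcases Nat.lt_or_ge (k + 1) r with hlt | hge
    · rw [pv_mid n t r r' p h (by omega) hlt] at h2; simp [pIn, qIn] at h2
    · rw [pv_last n t r r' p h (by omega) hge] at h2; simp [xV, qIn] at h2
  · rcases Nat.eq_zero_or_pos k with rfl | hk0
    · exfalso; rw [qv_zero] at h1; simp [xV, qIn] at h1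
    · rw [qv_mid n t r r' p h hk0 hk] at h1
      simp only [qIn, Sum.inr.injEq, Prod.mk.injEq, Fin.mk.injEq] at h1
      obtain ⟨rfl, rfl, hkk⟩ := h1
      have hv : k - 1 = k₀.val := congrArg Fin.val hkk
      right; rw [← h2]; congr 1; omega
  · rcases Nat.lt_or_ge (k + 1) (r' - r) with hlt | hge
    · rw [qv_mid n t r r' p h (by omega) hlt] at h2
      simp only [qIn, Sum.inr.injEq, Prod.mk.injEq, Fin.mk.injEq] at h2
      obtain ⟨rfl, rfl, hkk⟩ := h2
      have hv : k + 1 - 1 = k₀.val := congrArg Fin.val hkk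
      left; rw [← h1]; congr 1; all_goals omega
    · exfalso; rw [qv_last n t r r' p h (by omega) hge] at h2; simp [zV, qIn] at h2

omit hr hrr' in
lemma adj_zV {a : Fin n} {h₀ : Fin t} {v : ExV n t r r'}
    (hadj : (ExG n t r r').Adj (zV n t r r' a h₀) v) :
    ∃ p : Idx n, (p.1.1 = a ∧ v = pv n t r r' p h₀ 1) ∨
      (p.1.2 = a ∧ v = qv n t r r' p h₀ (r' - r - 1)) := by
  obtain ⟨p, h, k, ⟨hk, ⟨h1, h2⟩ | ⟨h1, h2⟩⟩ | ⟨hk, ⟨h1, h2⟩ | ⟨h1, h2⟩⟩⟩ :=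
    adj_cases n t r r' hadj
  · rcases Nat.eq_zero_or_pos k with rfl | hk0
    · rw [pv_zero] at h1
      simp only [zV, Sum.inl.injEq, Prod.mk.injEq] at h1
      obtain ⟨ha, rfl⟩ := h1
      exact ⟨p, Or.inl ⟨ha, h2.symm⟩⟩
    · exfalso; rw [pv_mid n t r r' p h hk0 hk] at h1; simp [pIn, zV] at h1
  · exfalso
    rcases Nat.lt_or_ge (k + 1) r with hlt | hge
    · rw [pv_mid n t r r' p h (by omega) hlt] at h2; simp [pIn, zV] at h2
    · rw [pv_last n t r r' p h (by omega) hge] at h2; simp [xV, zV] at h2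
  · exfalso
    rcases Nat.eq_zero_or_pos k with rfl | hk0
    · rw [qv_zero] at h1; simp [xV, zV] at h1
    · rw [qv_mid n t r r' p h hk0 hk] at h1; simp [qIn, zV] at h1
  · rcases Nat.lt_or_ge (k + 1) (r' - r) with hlt | hge
    · exfalso; rw [qv_mid n t r r' p h (by omega) hlt] at h2; simp [qIn, zV] at h2
    · rw [qv_last n t r r' p h (by omega) hge] at h2
      simp only [zV, Sum.inl.injEq, Prod.mk.injEq] at h2
      obtain ⟨ha, rfl⟩ := h2
      refine ⟨p, Or.inr ⟨ha, ?_⟩⟩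
      rw [← h1]; congr 1; omega
-- generic walk lemmas
omit hr hrr' in
lemma support_invariant {V : Type*} {G : SimpleGraph V} {S : Set V} {bad : V → Prop}
    (hclose : ∀ a ∈ S, ¬ bad a → ∀ b, G.Adj a b → b ∈ S) :
    ∀ {u y : V} (w : G.Walk u y), w.support.Nodup →
      (∀ v ∈ w.support, bad v → v = y) → u ∈ S → ∀ v ∈ w.support, v ∈ S := by
  intro u y w
  induction w with
  | nil =>
      intro _ _ hu v hv
      simp only [SimpleGraph.Walk.support_nil, List.mem_singleton] at hv
      subst hv; exact hu
  | @cons u u₂ y h w ih =>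
      intro hnd hbad hu
      rw [SimpleGraph.Walk.support_cons, List.nodup_cons] at hnd
      have hnbu : ¬ bad u := by
        intro hb
        have heq : u = y := hbad u (by simp) hb
        exact hnd.1 (heq ▸ SimpleGraph.Walk.end_mem_support w)
      have hu₂ : u₂ ∈ S := hclose u hu hnbu u₂ h
      intro v hv
      rw [SimpleGraph.Walk.support_cons, List.mem_cons] at hv
      rcases hv with rfl | hv
      · exact hu
      · exact ih hnd.2 (fun z hz hb => hbad z (by simp [hz]) hb) hu₂ v hv

omit hr hrr' in
lemma walk_ivt {V : Type*} {G : SimpleGraph V} (f : ℕ → V) (L : ℕ)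
    (inj : ∀ m ≤ L, ∀ m' ≤ L, f m = f m' → m = m')
    (adjT : ∀ a ≤ L, ∀ b ≤ L, G.Adj (f a) (f b) → b = a + 1 ∨ a = b + 1) :
    ∀ {u y : V} (w : G.Walk u y), (∀ v ∈ w.support, ∃ m ≤ L, v = f m) →
      ∀ a ≤ L, ∀ b ≤ L, u = f a → y = f b →
      ∀ c, min a b ≤ c → c ≤ max a b → ∃ v ∈ w.support, v = f c := by
  intro u y w
  induction w with
  | nil =>
      intro _ a ha b hb hu hy c hc1 hc2
      have : a = b := inj a ha b hb (hu ▸ hy ▸ rfl)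
      have : c = a := by omega
      refine ⟨f c, ?_, rfl⟩
      simp only [SimpleGraph.Walk.support_nil, List.mem_singleton]
      rw [hu, this]
  | @cons u u₂ y h w ih =>
      intro hS a ha b hb hu hy c hc1 hc2
      obtain ⟨a₂, ha₂, hu₂⟩ := hS u₂ (by simp)
      have hstep : a₂ = a + 1 ∨ a = a₂ + 1 := by
        apply adjT a ha a₂ ha₂
        rw [← hu, ← hu₂]; exact h
      rcases (by omega : c = a ∨ (min a₂ b ≤ c ∧ c ≤ max a₂ b)) with rfl | ⟨hc1', hc2'⟩
      · exact ⟨_, by simp, hu⟩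
      · obtain ⟨v, hv, hvc⟩ := ih (fun z hz => hS z (by simp [hz])) a₂ ha₂ b hb hu₂ hy c hc1' hc2'
        exact ⟨v, by simp [hv], hvc⟩
-- master lemma for internal (Y) vertices
omit hr hrr' in
lemma seg_case (σ : LinearOrder (ExV n t r r')) (f : ℕ → ExV n t r r') (L m₀ : ℕ)
    (hm0 : 0 < m₀) (hmL : m₀ < L)
    (inj : ∀ m ≤ L, ∀ m' ≤ L, f m = f m' → m = m')
    (nbr : ∀ m, 0 < m → m < L → ∀ v, (ExG n t r r').Adj (f m) v → v = f (m - 1) ∨ v = f (m + 1))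
    (nbrE : 2 ≤ L → ¬ (ExG n t r r').Adj (f 0) (f L))
    (h0 : σ.lt (f 0) (f m₀)) (hL : σ.lt (f L) (f m₀)) :
    Nat.card (sreach (ExG n t r r') σ.le r (f m₀)) ≤ 3 := by
  classical
  set G := ExG n t r r' with hG
  set x := f m₀ with hx
  set R := sreach G σ.le r x with hR
  have hlt_nle : ∀ a b : ExV n t r r', σ.lt a b → ¬ σ.le b a :=
    fun a b h => ((σ.lt_iff_le_not_ge a b).mp h).2
  set S : Set (ExV n t r r') := {v | ∃ m ≤ L, v = f m} with hS
  -- all supports of sreach-witnessing walks lie in S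
  have hsupp : ∀ {y : ExV n t r r'} (w : G.Walk x y), w.support.Nodup →
      (∀ z ∈ w.support, z ≠ y → σ.le x z) → ∀ v ∈ w.support, v ∈ S := by
    intro y w hnd hcond
    have hclose : ∀ a ∈ S, ¬ σ.lt a x → ∀ b, G.Adj a b → b ∈ S := by
      rintro a ⟨m, hm, rfl⟩ hna b hadj
      rcases Nat.eq_zero_or_pos m with rfl | hm0'
      · exact absurd h0 hna
      rcases Nat.lt_or_ge m L with hmL' | hmL'
      · rcases nbr m hm0' hmL' b hadj with rfl | rfl
        · exact ⟨m - 1, by omega, rfl⟩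
        · exact ⟨m + 1, by omega, rfl⟩
      · have : m = L := by omega
        subst this
        exact absurd hL hna
    refine support_invariant hclose w hnd (fun v hv hb => ?_) ⟨m₀, by omega, rfl⟩
    by_contra hne
    exact hlt_nle v x hb (hcond v hv hne)
  have adjT : ∀ a ≤ L, ∀ b ≤ L, G.Adj (f a) (f b) → b = a + 1 ∨ a = b + 1 := by
    intro a ha b hb hA
    have hne : a ≠ b := by
      intro h; subst h; exact hA.ne rfl
    by_cases haI : 0 < a ∧ a < L
    · rcases nbr a haI.1 haI.2 _ hA with h | h
      · have := inj b hb (a - 1) (by omega) h; omega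
      · have := inj b hb (a + 1) (by omega) h; omega
    by_cases hbI : 0 < b ∧ b < L
    · rcases nbr b hbI.1 hbI.2 _ hA.symm with h | h
      · have := inj a ha (b - 1) (by omega) h; omega
      · have := inj a ha (b + 1) (by omega) h; omega
    have ha' : a = 0 ∨ a = L := by omega
    have hb' : b = 0 ∨ b = L := by omega
    by_cases hL2 : 2 ≤ L
    · exfalso
      apply nbrE hL2
      rcases ha' with rfl | rfl
      · rcases hb' with rfl | rfl
        · exact absurd rfl hne
        · exact hA
      · rcases hb' with rfl | rfl
        · exact hA.symm
        · exact absurd rfl hne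
    · omega
  -- each y in R is f m for some m ≤ L
  have hmem : ∀ y ∈ R, ∃ m ≤ L, y = f m := by
    rintro y ⟨hyx, w, hw, hlen, hcond⟩
    exact hsupp w hw.support_nodup hcond y (SimpleGraph.Walk.end_mem_support w)
  -- key: no two distinct elements of R on the same side
  have key : ∀ y₁ y₂ b₁ b₂, y₁ ∈ R → y₂ ∈ R → b₁ ≤ L → b₂ ≤ L →
      min m₀ b₁ ≤ b₂ → b₂ ≤ max m₀ b₁ → b₂ ≠ b₁ → b₂ ≠ m₀ →
      y₁ = f b₁ → y₂ = f b₂ → False := by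
    rintro y₁ y₂ b₁ b₂ ⟨hy₁x, w₁, hw₁, hlen₁, hcond₁⟩ hy₂ hb₁ hb₂ hc1 hc2 hne1 hne2 hfy₁ hfy₂
    obtain ⟨v, hv, hvc⟩ := walk_ivt f L inj adjT w₁
      (hsupp w₁ hw₁.support_nodup hcond₁) m₀ (by omega) b₁ hb₁ rfl hfy₁ b₂ hc1 hc2
    have hvy₂ : v = y₂ := by rw [hvc, ← hfy₂]
    have hvne : v ≠ y₁ := by
      intro h
      rw [hfy₁, hvc] at h
      exact hne1 (inj b₂ hb₂ b₁ hb₁ h)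
    have hle : σ.le x y₂ := hvy₂ ▸ hcond₁ v hv hvne
    have : y₂ = x := σ.le_antisymm y₂ x hy₂.1 hle
    rw [hfy₂, hx] at this
    exact hne2 (inj b₂ hb₂ m₀ (by omega) this)
  set A : Set (ExV n t r r') := {y | y ∈ R ∧ ∃ m < m₀, y = f m} with hA
  set B : Set (ExV n t r r') := {y | y ∈ R ∧ ∃ m, m₀ < m ∧ m ≤ L ∧ y = f m} with hB
  have hsub : R ⊆ {x} ∪ A ∪ B := by
    intro y hy
    obtain ⟨m, hm, hfy⟩ := hmem y hy
    rcases lt_trichotomy m m₀ with h | h | h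
    · exact Or.inl (Or.inr ⟨hy, m, h, hfy⟩)
    · subst h; exact Or.inl (Or.inl (by simp [hx, hfy]))
    · exact Or.inr ⟨hy, m, h, hm, hfy⟩
  have hAs : A.Subsingleton := by
    rintro y₁ ⟨hy₁, b₁, hb₁, hf₁⟩ y₂ ⟨hy₂, b₂, hb₂, hf₂⟩
    rcases lt_trichotomy b₁ b₂ with h | h | h
    · exact absurd (key y₁ y₂ b₁ b₂ hy₁ hy₂ (by omega) (by omega) (by omega) (by omega)
        (by omega) (by omega) hf₁ hf₂) (by simp)
    · rw [hf₁, hf₂, h]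
    · exact absurd (key y₂ y₁ b₂ b₁ hy₂ hy₁ (by omega) (by omega) (by omega) (by omega)
        (by omega) (by omega) hf₂ hf₁) (by simp)
  have hBs : B.Subsingleton := by
    rintro y₁ ⟨hy₁, b₁, hb₁, hb₁', hf₁⟩ y₂ ⟨hy₂, b₂, hb₂, hb₂', hf₂⟩
    rcases lt_trichotomy b₁ b₂ with h | h | h
    · exact absurd (key y₂ y₁ b₂ b₁ hy₂ hy₁ (by omega) (by omega) (by omega) (by omega)
        (by omega) (by omega) hf₂ hf₁) (by simp)
    · rw [hf₁, hf₂, h]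
    · exact absurd (key y₁ y₂ b₁ b₂ hy₁ hy₂ (by omega) (by omega) (by omega) (by omega)
        (by omega) (by omega) hf₁ hf₂) (by simp)
  calc Nat.card R = R.ncard := Nat.card_coe_set_eq R
    _ ≤ ({x} ∪ A ∪ B : Set (ExV n t r r')).ncard := Set.ncard_le_ncard hsub (Set.toFinite _)
    _ ≤ ({x} ∪ A : Set (ExV n t r r')).ncard + B.ncard := Set.ncard_union_le _ _
    _ ≤ ({x} : Set (ExV n t r r')).ncard + A.ncard + B.ncard := by
        have := Set.ncard_union_le ({x} : Set (ExV n t r r')) A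
        omega
    _ ≤ 1 + 1 + 1 := by
        have h1 : ({x} : Set (ExV n t r r')).ncard = 1 := Set.ncard_singleton x
        have h2 : A.ncard ≤ 1 := (Set.ncard_le_one_iff (Set.toFinite _)).mpr
          (fun ha hb => hAs ha hb)
        have h3 : B.ncard ≤ 1 := (Set.ncard_le_one_iff (Set.toFinite _)).mpr
          (fun ha hb => hBs ha hb)
        omega
    _ ≤ 3 := by omega
-- injectivity of pv / qv and eta lemmas
omit hr hrr' in
lemma pv_inj (p : Idx n) (h : Fin t) {m m' : ℕ} (hm : m ≤ r) (hm' : m' ≤ r)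
    (he : pv n t r r' p h m = pv n t r r' p h m') : m = m' := by
  rcases Nat.eq_zero_or_pos m with rfl | h1 <;> rcases Nat.eq_zero_or_pos m' with rfl | h1'
  · rfl
  · exfalso
    rw [pv_zero] at he
    rcases Nat.lt_or_ge m' r with h2' | h2'
    · rw [pv_mid n t r r' p h h1' h2'] at he; simp [zV, pIn] at he
    · rw [pv_last n t r r' p h h1' h2'] at he; simp [zV, xV] at he
  · exfalso
    rw [pv_zero] at he
    rcases Nat.lt_or_ge m r with h2 | h2
    · rw [pv_mid n t r r' p h h1 h2] at he; simp [zV, pIn] at he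
    · rw [pv_last n t r r' p h h1 h2] at he; simp [zV, xV] at he
  · rcases Nat.lt_or_ge m r with h2 | h2 <;> rcases Nat.lt_or_ge m' r with h2' | h2'
    · rw [pv_mid n t r r' p h h1 h2, pv_mid n t r r' p h h1' h2'] at he
      simp only [pIn, Sum.inr.injEq, Sum.inl.injEq, Prod.mk.injEq, Fin.mk.injEq] at he
      omega
    · exfalso; rw [pv_mid n t r r' p h h1 h2, pv_last n t r r' p h h1' h2'] at he
      simp [pIn, xV] at he
    · exfalso; rw [pv_last n t r r' p h h1 h2, pv_mid n t r r' p h h1' h2'] at he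
      simp [pIn, xV] at he
    · omega

omit hr hrr' in
lemma qv_inj (p : Idx n) (h : Fin t) {m m' : ℕ} (hm : m ≤ r' - r) (hm' : m' ≤ r' - r)
    (he : qv n t r r' p h m = qv n t r r' p h m') : m = m' := by
  rcases Nat.eq_zero_or_pos m with rfl | h1 <;> rcases Nat.eq_zero_or_pos m' with rfl | h1'
  · rfl
  · exfalso
    rw [qv_zero] at he
    rcases Nat.lt_or_ge m' (r' - r) with h2' | h2'
    · rw [qv_mid n t r r' p h h1' h2'] at he; simp [xV, qIn] at he
    · rw [qv_last n t r r' p h h1' h2'] at he; simp [xV, zV] at he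
  · exfalso
    rw [qv_zero] at he
    rcases Nat.lt_or_ge m (r' - r) with h2 | h2
    · rw [qv_mid n t r r' p h h1 h2] at he; simp [xV, qIn] at he
    · rw [qv_last n t r r' p h h1 h2] at he; simp [xV, zV] at he
  · rcases Nat.lt_or_ge m (r' - r) with h2 | h2 <;> rcases Nat.lt_or_ge m' (r' - r) with h2' | h2'
    · rw [qv_mid n t r r' p h h1 h2, qv_mid n t r r' p h h1' h2'] at he
      simp only [qIn, Sum.inr.injEq, Prod.mk.injEq, Fin.mk.injEq] at he
      omega
    · exfalso; rw [qv_mid n t r r' p h h1 h2, qv_last n t r r' p h h1' h2'] at he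
      simp [qIn, zV] at he
    · exfalso; rw [qv_last n t r r' p h h1 h2, qv_mid n t r r' p h h1' h2'] at he
      simp [qIn, zV] at he
    · omega

omit hr hrr' in
lemma pv_eta (p : Idx n) (h : Fin t) (k : Fin (r - 1)) :
    pv n t r r' p h (k.val + 1) = pIn n t r r' p h k := by
  have hk := k.isLt
  rw [pv_mid n t r r' p h (by omega) (by omega)]
  have : (⟨k.val + 1 - 1, by omega⟩ : Fin (r - 1)) = k := Fin.ext (by simp)
  rw [this]

omit hr hrr' in
lemma qv_eta (p : Idx n) (h : Fin t) (k : Fin (r' - r - 1)) :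
    qv n t r r' p h (k.val + 1) = qIn n t r r' p h k := by
  have hk := k.isLt
  rw [qv_mid n t r r' p h (by omega) (by omega)]
  have : (⟨k.val + 1 - 1, by omega⟩ : Fin (r' - r - 1)) = k := Fin.ext (by simp)
  rw [this]

-- Y-case, P-internal vertices
omit hr in
lemma card_pIn (σ : LinearOrder (ExV n t r r'))
    (hZX : ∀ (a : Fin n × Fin t) (p : Idx n), σ.lt (Sum.inl a) (xV n t r r' p))
    (hXY : ∀ (p : Idx n) (w : (Idx n × Fin t × Fin (r - 1)) ⊕ (Idx n × Fin t × Fin (r' - r - 1))),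
      σ.lt (xV n t r r' p) (Sum.inr (Sum.inr w)))
    (p₀ : Idx n) (h₀ : Fin t) (k₀ : Fin (r - 1)) :
    Nat.card (sreach (ExG n t r r') σ.le r (pIn n t r r' p₀ h₀ k₀)) ≤ 3 := by
  have hk := k₀.isLt
  rw [← pv_eta n t r r' p₀ h₀ k₀]
  refine seg_case n t r r' σ (pv n t r r' p₀ h₀) r (k₀.val + 1) (by omega) (by omega)
    (fun m hm m' hm' he => pv_inj n t r r' p₀ h₀ hm hm' he) ?_ ?_ ?_ ?_
  · intro m h1 h2 v hadj
    rw [pv_mid n t r r' p₀ h₀ h1 h2] at hadj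
    rcases adj_pIn n t r r' hadj with h | h
    · left; rw [h]
    · right; rw [h]; congr 1; show m - 1 + 2 = m + 1; omega
  · intro hL2 hadj
    rw [pv_zero, pv_last n t r r' p₀ h₀ (by omega) le_rfl] at hadj
    obtain ⟨p, ⟨ha, hv⟩ | ⟨ha, hv⟩⟩ := adj_zV n t r r' hadj
    · rw [pv_mid n t r r' p h₀ (by omega) (by omega)] at hv
      simp [xV, pIn] at hv
    · rcases Nat.lt_or_ge 1 (r' - r) with hq | hq
      · rw [qv_mid n t r r' p h₀ (by omega) (by omega)] at hv
        simp [xV, qIn] at hv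
      · have h10 : r' - r - 1 = 0 := by omega
        rw [h10, qv_zero] at hv
        simp only [xV, Sum.inr.injEq, Sum.inl.injEq] at hv
        subst hv
        exact p₀.2 (ha.symm ▸ rfl)
  · rw [pv_zero, pv_eta n t r r' p₀ h₀ k₀]
    exact @lt_trans _ σ.toPartialOrder.toPreorder _ _ _
      (hZX (p₀.1.1, h₀) p₀) (hXY p₀ (Sum.inl (p₀, h₀, k₀)))
  · rw [pv_last n t r r' p₀ h₀ (by omega) le_rfl, pv_eta n t r r' p₀ h₀ k₀]
    exact hXY p₀ (Sum.inl (p₀, h₀, k₀))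

-- Y-case, Q-internal vertices
omit hr in
lemma card_qIn (σ : LinearOrder (ExV n t r r'))
    (hZX : ∀ (a : Fin n × Fin t) (p : Idx n), σ.lt (Sum.inl a) (xV n t r r' p))
    (hXY : ∀ (p : Idx n) (w : (Idx n × Fin t × Fin (r - 1)) ⊕ (Idx n × Fin t × Fin (r' - r - 1))),
      σ.lt (xV n t r r' p) (Sum.inr (Sum.inr w)))
    (p₀ : Idx n) (h₀ : Fin t) (k₀ : Fin (r' - r - 1)) :
    Nat.card (sreach (ExG n t r r') σ.le r (qIn n t r r' p₀ h₀ k₀)) ≤ 3 := by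
  have hk := k₀.isLt
  rw [← qv_eta n t r r' p₀ h₀ k₀]
  refine seg_case n t r r' σ (qv n t r r' p₀ h₀) (r' - r) (k₀.val + 1) (by omega) (by omega)
    (fun m hm m' hm' he => qv_inj n t r r' p₀ h₀ hm hm' he) ?_ ?_ ?_ ?_
  · intro m h1 h2 v hadj
    rw [qv_mid n t r r' p₀ h₀ h1 h2] at hadj
    rcases adj_qIn n t r r' hadj with h | h
    · left; rw [h]
    · right; rw [h]; congr 1; show m - 1 + 2 = m + 1; omega
  · intro hL2 hadj
    rw [qv_zero, qv_last n t r r' p₀ h₀ (by omega) le_rfl] at hadj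
    obtain ⟨h, hc | hc⟩ := adj_xV n t r r' hadj
    · rcases Nat.eq_zero_or_pos (r - 1) with hr1 | hr1
      · rw [hr1, pv_zero] at hc
        simp only [zV, Sum.inl.injEq, Prod.mk.injEq] at hc
        exact p₀.2 (by rw [hc.1])
      · rw [pv_mid n t r r' p₀ h (by omega) (by omega)] at hc
        simp [zV, pIn] at hc
    · rw [qv_mid n t r r' p₀ h (by omega) (by omega)] at hc
      simp [zV, qIn] at hc
  · rw [qv_zero, qv_eta n t r r' p₀ h₀ k₀]
    exact hXY p₀ (Sum.inr (p₀, h₀, k₀))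
  · rw [qv_last n t r r' p₀ h₀ (by omega) le_rfl, qv_eta n t r r' p₀ h₀ k₀]
    exact @lt_trans _ σ.toPartialOrder.toPreorder _ _ _
      (hZX (p₀.1.2, h₀) p₀) (hXY p₀ (Sum.inr (p₀, h₀, k₀)))

-- X-case
lemma card_xV (σ : LinearOrder (ExV n t r r'))
    (ht : 4 ≤ t)
    (hZX : ∀ (a : Fin n × Fin t) (p : Idx n), σ.lt (Sum.inl a) (xV n t r r' p))
    (hXY : ∀ (p : Idx n) (w : (Idx n × Fin t × Fin (r - 1)) ⊕ (Idx n × Fin t × Fin (r' - r - 1))),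
      σ.lt (xV n t r r' p) (Sum.inr (Sum.inr w)))
    (p₀ : Idx n) :
    Nat.card (sreach (ExG n t r r') σ.le r (xV n t r r' p₀)) ≤ 2 * t + 1 := by
  classical
  set G := ExG n t r r' with hG
  set x := xV n t r r' p₀ with hx
  have hlt_nle : ∀ a b : ExV n t r r', σ.lt a b → ¬ σ.le b a :=
    fun a b h => ((σ.lt_iff_le_not_ge a b).mp h).2
  set S : Set (ExV n t r r') :=
    {v | (∃ (h : Fin t) (m : ℕ), m ≤ r ∧ v = pv n t r r' p₀ h m) ∨
         (∃ (h : Fin t) (m : ℕ), m ≤ r' - r ∧ v = qv n t r r' p₀ h m)} with hSdef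
  have hxS : ∀ (h : Fin t) (b : ExV n t r r'), G.Adj x b → b ∈ S := by
    intro h b hadj
    rw [hx] at hadj
    obtain ⟨h', hb | hb⟩ := adj_xV n t r r' hadj
    · exact Or.inl ⟨h', r - 1, by omega, hb⟩
    · exact Or.inr ⟨h', 1, by omega, hb⟩
  have hclose : ∀ a ∈ S, ¬ (∃ c : Fin n × Fin t, a = Sum.inl c) → ∀ b, G.Adj a b → b ∈ S := by
    rintro a (⟨h, m, hm, rfl⟩ | ⟨h, m, hm, rfl⟩) hnb b hadj
    · rcases Nat.eq_zero_or_pos m with rfl | h1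
      · exact absurd ⟨(p₀.1.1, h), by rw [pv_zero]; rfl⟩ hnb
      rcases Nat.lt_or_ge m r with h2 | h2
      · rw [pv_mid n t r r' p₀ h h1 h2] at hadj
        rcases adj_pIn n t r r' hadj with rfl | rfl
        · exact Or.inl ⟨h, _, by show m - 1 ≤ r; omega, rfl⟩
        · exact Or.inl ⟨h, _, by show m - 1 + 2 ≤ r; omega, rfl⟩
      · rw [pv_last n t r r' p₀ h h1 h2] at hadj
        exact hxS h b hadj
    · rcases Nat.eq_zero_or_pos m with rfl | h1
      · rw [qv_zero] at hadj
        exact hxS h b hadj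
      rcases Nat.lt_or_ge m (r' - r) with h2 | h2
      · rw [qv_mid n t r r' p₀ h h1 h2] at hadj
        rcases adj_qIn n t r r' hadj with rfl | rfl
        · exact Or.inr ⟨h, _, by show m - 1 ≤ r' - r; omega, rfl⟩
        · exact Or.inr ⟨h, _, by show m - 1 + 2 ≤ r' - r; omega, rfl⟩
      · rw [qv_last n t r r' p₀ h h1 h2] at hadj
        exact absurd ⟨(p₀.1.2, h), by rw [qv_last n t r r' p₀ h h1 h2]; rfl⟩ hnb
  have hsub : sreach G σ.le r x ⊆
      {x} ∪ (Set.range fun h : Fin t => zV n t r r' p₀.1.1 h)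
          ∪ (Set.range fun h : Fin t => zV n t r r' p₀.1.2 h) := by
    rintro y ⟨hyx, w, hw, hlen, hcond⟩
    have h0 : Fin t := ⟨0, by omega⟩
    have hxmem : x ∈ S := Or.inl ⟨h0, r, le_rfl, (pv_last n t r r' p₀ h0 (by omega) le_rfl).symm⟩
    have hyS : y ∈ S := by
      refine support_invariant hclose w hw.support_nodup (fun v hv hb => ?_) hxmem y
        (SimpleGraph.Walk.end_mem_support w)
      by_contra hne
      obtain ⟨c, rfl⟩ := hb
      exact hlt_nle _ _ (hZX c p₀) (hcond _ hv hne)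
    rcases hyS with ⟨h, m, hm, rfl⟩ | ⟨h, m, hm, rfl⟩
    · rcases Nat.eq_zero_or_pos m with rfl | h1
      · rw [pv_zero]; exact Or.inl (Or.inr ⟨h, rfl⟩)
      rcases Nat.lt_or_ge m r with h2 | h2
      · exfalso
        rw [pv_mid n t r r' p₀ h h1 h2] at hyx
        exact hlt_nle _ _ (hXY p₀ (Sum.inl (p₀, h, ⟨m - 1, by omega⟩))) hyx
      · rw [pv_last n t r r' p₀ h h1 h2]; exact Or.inl (Or.inl rfl)
    · rcases Nat.eq_zero_or_pos m with rfl | h1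
      · rw [qv_zero]; exact Or.inl (Or.inl rfl)
      rcases Nat.lt_or_ge m (r' - r) with h2 | h2
      · exfalso
        rw [qv_mid n t r r' p₀ h h1 h2] at hyx
        exact hlt_nle _ _ (hXY p₀ (Sum.inr (p₀, h, ⟨m - 1, by omega⟩))) hyx
      · rw [qv_last n t r r' p₀ h h1 h2]; exact Or.inr ⟨h, rfl⟩
  have hrange : ∀ g : Fin t → ExV n t r r', (Set.range g).ncard ≤ t := by
    intro g
    rw [← Set.image_univ]
    refine le_trans (Set.ncard_image_le (Set.toFinite _)) ?_
    rw [Set.ncard_univ]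
    simp
  calc Nat.card (sreach G σ.le r x) = (sreach G σ.le r x).ncard := Nat.card_coe_set_eq _
    _ ≤ _ := Set.ncard_le_ncard hsub (Set.toFinite _)
    _ ≤ ({x} ∪ (Set.range fun h : Fin t => zV n t r r' p₀.1.1 h) : Set (ExV n t r r')).ncard
        + (Set.range fun h : Fin t => zV n t r r' p₀.1.2 h).ncard := Set.ncard_union_le _ _
    _ ≤ 2 * t + 1 := by
        have h1 := Set.ncard_union_le ({x} : Set (ExV n t r r'))
          (Set.range fun h : Fin t => zV n t r r' p₀.1.1 h)
        have h2 := hrange (fun h : Fin t => zV n t r r' p₀.1.1 h)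
        have h3 := hrange (fun h : Fin t => zV n t r r' p₀.1.2 h)
        have h4 : ({x} : Set (ExV n t r r')).ncard = 1 := Set.ncard_singleton x
        omega

-- Z-case
lemma card_zV (σ : LinearOrder (ExV n t r r'))
    (hZX : ∀ (a : Fin n × Fin t) (p : Idx n), σ.lt (Sum.inl a) (xV n t r r' p))
    (hXY : ∀ (p : Idx n) (w : (Idx n × Fin t × Fin (r - 1)) ⊕ (Idx n × Fin t × Fin (r' - r - 1))),
      σ.lt (xV n t r r' p) (Sum.inr (Sum.inr w)))
    (i : Fin n) (h₀ : Fin t) :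
    Nat.card (sreach (ExG n t r r') σ.le r (zV n t r r' i h₀)) ≤ t := by
  classical
  set G := ExG n t r r' with hG
  set x := zV n t r r' i h₀ with hx
  have hlt_nle : ∀ a b : ExV n t r r', σ.lt a b → ¬ σ.le b a :=
    fun a b h => ((σ.lt_iff_le_not_ge a b).mp h).2
  have hsub : sreach G σ.le r x ⊆ Set.range fun h : Fin t => zV n t r r' i h := by
    rintro y ⟨hyx, w, hw, hlen, hcond⟩
    have hpsix : psi n t r r' i x = 0 := by
      rw [hx]
      show zval n r i i = 0
      simp [zval]
    have hpsiy : psi n t r r' i y ≤ r := by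
      have := psi_walk n t r r' hr hrr' (i := i) w
      omega
    match y with
    | Sum.inl (a, h') =>
        have : zval n r i a ≤ r := hpsiy
        rw [zval] at this
        split_ifs at this with hai
        · subst hai; exact ⟨h', rfl⟩
        · omega
    | Sum.inr (Sum.inl p) =>
        exact absurd hyx (hlt_nle _ _ (hZX (i, h₀) p))
    | Sum.inr (Sum.inr (Sum.inl (p, h, k))) =>
        exact absurd hyx (hlt_nle _ _ (@lt_trans _ σ.toPartialOrder.toPreorder _ _ _
          (hZX (i, h₀) p) (hXY p (Sum.inl (p, h, k)))))
    | Sum.inr (Sum.inr (Sum.inr (p, h, k))) =>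
        exact absurd hyx (hlt_nle _ _ (@lt_trans _ σ.toPartialOrder.toPreorder _ _ _
          (hZX (i, h₀) p) (hXY p (Sum.inr (p, h, k)))))
  calc Nat.card (sreach G σ.le r x) = (sreach G σ.le r x).ncard := Nat.card_coe_set_eq _
    _ ≤ (Set.range fun h : Fin t => zV n t r r' i h).ncard :=
        Set.ncard_le_ncard hsub (Set.toFinite _)
    _ ≤ t := by
        rw [← Set.image_univ]
        refine le_trans (Set.ncard_image_le (Set.toFinite _)) ?_
        rw [Set.ncard_univ]
        simp

omit hr hrr'

/-- Claim 1 of Example 1: if `Z <_σ X <_σ Y` then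
`scol_r(G, σ) ≤ 2t + 1`. -/
theorem example1_claim1 (ht : 4 ≤ t) (htn : t ≤ n) (hr : 1 ≤ r) (hrr' : r < r')
    (σ : LinearOrder (ExV n t r r'))
    (hZX : ∀ (a : Fin n × Fin t) (p : Idx n), σ.lt (Sum.inl a) (xV n t r r' p))
    (hXY : ∀ (p : Idx n) (w : (Idx n × Fin t × Fin (r - 1)) ⊕ (Idx n × Fin t × Fin (r' - r - 1))),
      σ.lt (xV n t r r' p) (Sum.inr (Sum.inr w))) :
    scolOn (ExG n t r r') σ.le r ≤ 2 * t + 1 := by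
  rw [scolOn]
  refine Finset.sup_le fun x _ => ?_
  rcases x with ⟨i, h⟩ | (p | (⟨p, h, k⟩ | ⟨p, h, k⟩))
  · exact le_trans (card_zV n t r r' hr hrr' σ hZX hXY i h) (by omega)
  · exact card_xV n t r r' hr hrr' σ ht hZX hXY p
  · exact le_trans (card_pIn n t r r' hrr' σ hZX hXY p h k) (by omega)
  · exact le_trans (card_qIn n t r r' hrr' σ hZX hXY p h k) (by omega)
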